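/- Let n, k, t be positive integers with kt ≤ n, and let G_1, …, G_t be pairwise edge-disjoint subgraphs of the complete bipartite graph K_{n,n} such that no G_i contains a cycle of length at most 2k. Then there exists a 3-partite 3-uniform hypergraph on at most 3n vertices which is tight-cycle-free and has exactly k · Σ_{i=1}^{t} |E(G_i)| hyperedges. -/

import Mathlib

/-- The edge ("window") `{v i, v (i+1), …, v (i+r-1)}` of a tight cycle. -/
def tightWindow {V : Type*} [DecidableEq V] (r : ℕ) {ℓ : ℕ} (v : ZMod ℓ → V)
    (i : ZMod ℓ) : Finset V :=
  Finset.image (fun j : Fin r => v (i + (j : ℕ))) Finset.univ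

/-- `E` contains an `r`-uniform tight cycle of length `ℓ`: distinct vertices
`v 0, …, v (ℓ-1)` all of whose `r`-windows (indices mod `ℓ`) are edges of `E`. -/
def IsTightCycleIn {V : Type*} [DecidableEq V] (r ℓ : ℕ) (E : Set (Finset V)) : Prop :=
  ∃ v : ZMod ℓ → V, Function.Injective v ∧ ∀ i : ZMod ℓ, tightWindow r v i ∈ E

/-- `E` contains an `r`-uniform tight cycle of some length `ℓ > r`. -/
def HasTightCycle {V : Type*} [DecidableEq V] (r : ℕ) (E : Set (Finset V)) : Prop :=
  ∃ ℓ : ℕ, r < ℓ ∧ IsTightCycleIn r ℓ E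

/-- `E` is tight-cycle-free. -/
def TightCycleFree {V : Type*} [DecidableEq V] (r : ℕ) (E : Set (Finset V)) : Prop :=
  ¬ HasTightCycle r E

/-- `f_r(n)`: the maximum number of edges of an `r`-uniform tight-cycle-free
hypergraph on `n` vertices. -/
noncomputable def tightCycleTuran (r n : ℕ) : ℕ :=
  sSup {m | ∃ E : Finset (Finset (Fin n)), (∀ e ∈ E, e.card = r) ∧
    TightCycleFree r (E : Set (Finset (Fin n))) ∧ E.card = m}

lemma tightWindow_three {V : Type*} [DecidableEq V] {ℓ : ℕ} (v : ZMod ℓ → V) (c : ZMod ℓ) :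
    tightWindow 3 v c = {v c, v (c+1), v (c+2)} := by
  unfold tightWindow
  ext x
  simp only [Finset.mem_image, Finset.mem_univ, true_and, Finset.mem_insert,
    Finset.mem_singleton]
  constructor
  · rintro ⟨j, rfl⟩
    fin_cases j <;> simp
  · rintro (rfl | rfl | rfl)
    · exact ⟨0, by simp⟩
    · exact ⟨1, by simp⟩
    · exact ⟨2, by simp⟩

lemma buildWalk {V : Type*} (H : SimpleGraph V) (W : ℕ → V) :
    ∀ N : ℕ, (∀ r < N, H.Adj (W r) (W (r+1))) →
    ∃ w : H.Walk (W 0) (W N), w.length = N ∧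
      w.support = (List.range (N+1)).map W ∧
      w.edges = (List.range N).map (fun r => s(W r, W (r+1)))
  | 0, _ => ⟨SimpleGraph.Walk.nil, by simp, by simp [List.range_succ], by simp⟩
  | (N+1), h => by
      obtain ⟨w, hl, hs, he⟩ := buildWalk H W N (fun r hr => h r (by omega))
      refine ⟨w.concat (h N (by omega)), ?_, ?_, ?_⟩
      · simp [SimpleGraph.Walk.length_concat, hl]
      · rw [SimpleGraph.Walk.support_concat, hs]
        rw [show N+1+1 = (N+1)+1 from rfl, List.range_succ (n := N+1)]
        simp
      · rw [SimpleGraph.Walk.edges_concat, he, List.range_succ]; simp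

lemma mul_add_inj {k i i' j j' : ℕ} (hj : j < k) (hj' : j' < k)
    (h : i * k + j = i' * k + j') : i = i' ∧ j = j' := by
  have h1 : i = i' := by
    by_contra hne
    rcases Nat.lt_or_ge i i' with hlt | hge
    · have h2 : (i+1) * k ≤ i' * k := Nat.mul_le_mul_right _ hlt
      rw [add_mul, one_mul] at h2; omega
    · have hlt : i' < i := by omega
      have h2 : (i'+1) * k ≤ i * k := Nat.mul_le_mul_right _ hlt
      rw [add_mul, one_mul] at h2; omega
  subst h1; omega

def xv (n : ℕ) (a : Fin n) : Fin (3*n) := ⟨a.val, by have := a.isLt; omega⟩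
def yv (n : ℕ) (b : Fin n) : Fin (3*n) := ⟨n + b.val, by have := b.isLt; omega⟩
def zv (n k t : ℕ) (hkt : k * t ≤ n) (i : Fin t) (j : Fin k) : Fin (3*n) :=
  ⟨2*n + (i.val * k + j.val), by
    have h1 : i.val * k + j.val < (i.val + 1) * k := by
      have := j.isLt; rw [add_mul, one_mul]; omega
    have h2 : (i.val+1) * k ≤ t * k := Nat.mul_le_mul_right _ i.isLt
    have h3 : t * k = k * t := Nat.mul_comm t k
    omega⟩

lemma xv_val (n : ℕ) (a : Fin n) : (xv n a).val = a.val := rfl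
lemma yv_val (n : ℕ) (b : Fin n) : (yv n b).val = n + b.val := rfl
lemma zv_val (n k t : ℕ) (hkt : k * t ≤ n) (i : Fin t) (j : Fin k) :
    (zv n k t hkt i j).val = 2*n + (i.val * k + j.val) := rfl

def decV (n : ℕ) (hn : 0 < n) (u : Fin (3*n)) : Fin n ⊕ Fin n :=
  if h : u.val < n then Sum.inl ⟨u.val, h⟩
  else if h2 : u.val < 2*n then Sum.inr ⟨u.val - n, by omega⟩
  else Sum.inl ⟨0, hn⟩

def clsV (n : ℕ) (u : Fin (3*n)) : ℕ :=
  if u.val < n then 0 else if u.val < 2*n then 1 else 2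

lemma clsV_lt3 (n : ℕ) (u : Fin (3*n)) : clsV n u < 3 := by
  unfold clsV; split_ifs <;> omega

lemma clsV_xv (n : ℕ) (a : Fin n) : clsV n (xv n a) = 0 := by
  simp [clsV, xv, a.isLt]

lemma clsV_yv (n : ℕ) (hn : 0 < n) (b : Fin n) : clsV n (yv n b) = 1 := by
  have := b.isLt; have h1 : (yv n b).val = n + b.val := rfl; unfold clsV; rw [h1]; split_ifs <;> omega

lemma clsV_zv (n k t : ℕ) (hn : 0 < n) (hkt : k * t ≤ n) (i : Fin t) (j : Fin k) :
    clsV n (zv n k t hkt i j) = 2 := by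
  simp [clsV, zv]; omega

lemma clsV_ne2_lt (n : ℕ) (u : Fin (3*n)) (h : clsV n u ≠ 2) : u.val < 2*n := by
  unfold clsV at h; split_ifs at h <;> omega

lemma decV_inj (n : ℕ) (hn : 0 < n) (u w : Fin (3*n)) (hu : u.val < 2*n) (hw : w.val < 2*n)
    (h : decV n hn u = decV n hn w) : u = w := by
  unfold decV at h
  apply Fin.ext
  split_ifs at h <;>
    first
    | omega
    | (have h9 := congrArg (Sum.elim Fin.val (fun f : Fin n => f.val + n)) h
       simp only [Sum.elim_inl, Sum.elim_inr] at h9 ; omega)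
    | (exact absurd h (by simp))

lemma xv_inj {n : ℕ} {a a' : Fin n} (h : xv n a = xv n a') : a = a' := by
  have := congrArg Fin.val h; simp only [xv] at this; exact Fin.ext this

lemma yv_inj {n : ℕ} {b b' : Fin n} (h : yv n b = yv n b') : b = b' := by
  apply Fin.ext; have := congrArg Fin.val h; simp [yv] at this; omega

lemma zv_inj {n k t : ℕ} {hkt : k * t ≤ n} {i i' : Fin t} {j j' : Fin k}
    (h : zv n k t hkt i j = zv n k t hkt i' j') : i = i' ∧ j = j' := by
  have := congrArg Fin.val h
  simp only [zv] at this
  have h2 : i.val * k + j.val = i'.val * k + j'.val := by omega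
  obtain ⟨h3, h4⟩ := mul_add_inj j.isLt j'.isLt h2
  exact ⟨Fin.ext h3, Fin.ext h4⟩

lemma decV_xv (n : ℕ) (hn : 0 < n) (a : Fin n) : decV n hn (xv n a) = Sum.inl a := by
  have h := a.isLt
  unfold decV
  rw [dif_pos (show (xv n a).val < n from h)]
  rfl

lemma decV_yv (n : ℕ) (hn : 0 < n) (b : Fin n) : decV n hn (yv n b) = Sum.inr b := by
  have h := b.isLt
  unfold decV
  rw [dif_neg (show ¬ (yv n b).val < n by rw [yv_val]; omega),
    dif_pos (show (yv n b).val < 2*n by rw [yv_val]; omega)]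
  congr 1
  exact Fin.ext (by simp [yv_val])

lemma clsV_injOn (n k t : ℕ) (hn : 0 < n) (hkt : k * t ≤ n)
    {i : Fin t} {a b : Fin n} {j : Fin k} {u w : Fin (3*n)}
    (hu : u ∈ ({xv n a, yv n b, zv n k t hkt i j} : Finset (Fin (3*n))))
    (hw : w ∈ ({xv n a, yv n b, zv n k t hkt i j} : Finset (Fin (3*n))))
    (h : clsV n u = clsV n w) : u = w := by
  simp only [Finset.mem_insert, Finset.mem_singleton] at hu hw
  have c0 := clsV_xv n a
  have c1 := clsV_yv n hn b
  have c2 := clsV_zv n k t hn hkt i j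
  rcases hu with rfl|rfl|rfl <;> rcases hw with rfl|rfl|rfl <;> first | rfl | omega

lemma key_decode (n k t : ℕ) (hn : 0 < n) (hkt : k * t ≤ n)
    (G : Fin t → SimpleGraph (Fin n ⊕ Fin n)) (E : Finset (Finset (Fin (3*n))))
    (hmem : ∀ S ∈ E, ∃ (i : Fin t) (a b : Fin n) (j : Fin k),
      (G i).Adj (Sum.inl a) (Sum.inr b) ∧ S = {xv n a, yv n b, zv n k t hkt i j})
    {S : Finset (Fin (3*n))} (hS : S ∈ E) {A B C : Fin (3*n)}
    (hA : A ∈ S) (hB : B ∈ S) (hC : C ∈ S)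
    (hcA : clsV n A ≠ 2) (hcB : clsV n B ≠ 2) (hcAB : clsV n A ≠ clsV n B)
    (hcC : clsV n C = 2) :
    ∃ (i : Fin t) (j : Fin k), C = zv n k t hkt i j ∧
      (G i).Adj (decV n hn A) (decV n hn B) := by
  obtain ⟨i, a, b, j, hadj, hSeq⟩ := hmem S hS
  subst hSeq
  simp only [Finset.mem_insert, Finset.mem_singleton] at hA hB hC
  have c0 := clsV_xv n a
  have c1 := clsV_yv n hn b
  have c2 := clsV_zv n k t hn hkt i j
  refine ⟨i, j, ?_, ?_⟩
  · rcases hC with rfl|rfl|rfl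
    · exfalso; omega
    · exfalso; omega
    · rfl
  · rcases hA with rfl|rfl|rfl <;> rcases hB with rfl|rfl|rfl
    · exfalso; omega
    · rw [decV_xv, decV_yv]; exact hadj
    · exfalso; omega
    · rw [decV_xv, decV_yv]; exact hadj.symm
    · exfalso; omega
    · exfalso; omega
    · exfalso; omega
    · exfalso; omega
    · exfalso; omega

lemma tcf_main (n k t : ℕ) (hn : 0 < n) (hk : 0 < k) (ht : 0 < t) (hkt : k * t ≤ n)
    (G : Fin t → SimpleGraph (Fin n ⊕ Fin n))
    (hdisj : ∀ i j, i ≠ j → Disjoint ((G i).edgeSet) ((G j).edgeSet))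
    (hgirth : ∀ i, ∀ x, ∀ w : (G i).Walk x x, w.IsCycle → ¬ w.length ≤ 2 * k)
    (E : Finset (Finset (Fin (3*n))))
    (hmem : ∀ S ∈ E, ∃ (i : Fin t) (a b : Fin n) (j : Fin k),
      (G i).Adj (Sum.inl a) (Sum.inr b) ∧ S = {xv n a, yv n b, zv n k t hkt i j}) :
    TightCycleFree 3 (E : Set (Finset (Fin (3*n)))) := by
  classical
  rintro ⟨ℓ, hℓ, v, hv, hwin⟩
  haveI : NeZero ℓ := ⟨by omega⟩
  set f : ℕ → Fin (3*n) := fun i => v ((i : ℕ) : ZMod ℓ) with hfdef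
  have hper : ∀ i, f (i + ℓ) = f i := by
    intro i
    simp only [hfdef]
    congr 1
    push_cast [ZMod.natCast_self]
    ring
  have fmod : ∀ a b : ℕ, f a = f b → a % ℓ = b % ℓ := by
    intro a b h
    have h2 := hv h
    rwa [ZMod.natCast_eq_natCast_iff'] at h2
  have hWE : ∀ i : ℕ, ({f i, f (i+1), f (i+2)} : Finset (Fin (3*n))) ∈ E := by
    intro i
    have h := hwin ((i : ℕ) : ZMod ℓ)
    rw [tightWindow_three] at h
    have e1 : ((i : ℕ) : ZMod ℓ) + 1 = ((i+1 : ℕ) : ZMod ℓ) := by push_cast; ring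
    have e2 : ((i : ℕ) : ZMod ℓ) + 2 = ((i+2 : ℕ) : ZMod ℓ) := by push_cast; ring
    rw [e1, e2] at h
    exact h
  have hne_gap : ∀ i d : ℕ, 0 < d → d < ℓ → f i ≠ f (i + d) := by
    intro i d hd1 hd2 h
    have hm : i + 0 ≡ i + d [MOD ℓ] := by
      show (i + 0) % ℓ = (i + d) % ℓ
      rw [Nat.add_zero]
      exact fmod _ _ h
    have h2 := Nat.ModEq.add_left_cancel' i hm
    have h3 := Nat.ModEq.eq_of_lt_of_lt h2 (by omega) (by omega)
    omega
  have hclsd : ∀ i : ℕ, clsV n (f i) ≠ clsV n (f (i+1)) ∧ clsV n (f i) ≠ clsV n (f (i+2))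
      ∧ clsV n (f (i+1)) ≠ clsV n (f (i+2)) := by
    intro i
    obtain ⟨ii, a, b, j, hadj, hSeq⟩ := hmem _ (hWE i)
    have m0 : f i ∈ ({xv n a, yv n b, zv n k t hkt ii j} : Finset (Fin (3*n))) := by
      rw [← hSeq]; simp
    have m1 : f (i+1) ∈ ({xv n a, yv n b, zv n k t hkt ii j} : Finset (Fin (3*n))) := by
      rw [← hSeq]; simp
    have m2 : f (i+2) ∈ ({xv n a, yv n b, zv n k t hkt ii j} : Finset (Fin (3*n))) := by
      rw [← hSeq]; simp
    refine ⟨?_, ?_, ?_⟩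
    · intro hq
      exact hne_gap i 1 (by omega) (by omega) (clsV_injOn n k t hn hkt m0 m1 hq)
    · intro hq
      exact hne_gap i 2 (by omega) (by omega) (clsV_injOn n k t hn hkt m0 m2 hq)
    · intro hq
      exact hne_gap (i+1) 1 (by omega) (by omega) (clsV_injOn n k t hn hkt m1 m2 hq)
  have hcls3 : ∀ i, clsV n (f (i+3)) = clsV n (f i) := by
    intro i
    have h1 := hclsd i
    have h2 := hclsd (i+1)
    simp only [show i+1+1 = i+2 from rfl, show i+1+2 = i+3 from rfl] at h2
    have b0 := clsV_lt3 n (f i)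
    have b1 := clsV_lt3 n (f (i+1))
    have b2 := clsV_lt3 n (f (i+2))
    have b3 := clsV_lt3 n (f (i+3))
    omega
  have hclsper : ∀ (a i : ℕ), clsV n (f (i + 3*a)) = clsV n (f i) := by
    intro a
    induction a with
    | zero => intro i; norm_num
    | succ a ih =>
      intro i
      have e : i + 3*(a+1) = (i + 3*a) + 3 := by ring
      rw [e, hcls3, ih]
  have hf0 : f ℓ = f 0 := by
    have h := hper 0
    rwa [Nat.zero_add] at h
  have hl3 : ℓ % 3 = 0 := by
    have h1 : clsV n (f (ℓ % 3)) = clsV n (f 0) := by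
      have e : ℓ % 3 + 3 * (ℓ / 3) = ℓ := by omega
      calc clsV n (f (ℓ % 3)) = clsV n (f (ℓ % 3 + 3 * (ℓ/3))) := (hclsper _ _).symm
        _ = clsV n (f ℓ) := by rw [e]
        _ = clsV n (f 0) := by rw [hf0]
    have h2 := hclsd 0
    simp only [show (0:ℕ)+1 = 1 from rfl, show (0:ℕ)+2 = 2 from rfl] at h2
    rcases (by omega : ℓ % 3 = 0 ∨ ℓ % 3 = 1 ∨ ℓ % 3 = 2) with h|h|h
    · exact h
    · rw [h] at h1; omega
    · rw [h] at h1; omega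
  set s := ℓ / 3 with hsdef
  have hls : ℓ = 3 * s := by omega
  have hs2 : 2 ≤ s := by omega
  have hpex : ∃ p, clsV n (f p) = 2 := by
    have h2 := hclsd 0
    simp only [show (0:ℕ)+1 = 1 from rfl, show (0:ℕ)+2 = 2 from rfl] at h2
    have b0 := clsV_lt3 n (f 0)
    have b1 := clsV_lt3 n (f 1)
    have b2 := clsV_lt3 n (f 2)
    rcases (by omega : clsV n (f 0) = 2 ∨ clsV n (f 1) = 2 ∨ clsV n (f 2) = 2) with h|h|h
    · exact ⟨0, h⟩
    · exact ⟨1, h⟩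
    · exact ⟨2, h⟩
  obtain ⟨p, hcp⟩ := hpex
  have hcz : ∀ a : ℕ, clsV n (f (p + 3*a)) = 2 := by
    intro a; rw [hclsper a p]; exact hcp
  have hc1 : clsV n (f (p+1)) ≠ 2 := by
    have := (hclsd p).1; omega
  have hc2 : clsV n (f (p+2)) ≠ 2 := by
    have := (hclsd p).2.1; omega
  have hc12 : clsV n (f (p+1)) ≠ clsV n (f (p+2)) := (hclsd p).2.2
  have hc1a : ∀ a : ℕ, clsV n (f (p + 3*a + 1)) = clsV n (f (p+1)) := by
    intro a
    have e : p + 3*a + 1 = (p+1) + 3*a := by ring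
    rw [e]; exact hclsper a (p+1)
  have hc2a : ∀ a : ℕ, clsV n (f (p + 3*a + 2)) = clsV n (f (p+2)) := by
    intro a
    have e : p + 3*a + 2 = (p+2) + 3*a := by ring
    rw [e]; exact hclsper a (p+2)
  have H1 : ∀ a : ℕ, ∃ (i : Fin t) (j : Fin k), f (p + 3*a) = zv n k t hkt i j ∧
      (G i).Adj (decV n hn (f (p + 3*a + 1))) (decV n hn (f (p + 3*a + 2))) := by
    intro a
    apply key_decode n k t hn hkt G E hmem (hWE (p + 3*a))
      (A := f (p + 3*a + 1)) (B := f (p + 3*a + 2)) (C := f (p + 3*a))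
    · simp
    · simp
    · simp
    · rw [hc1a]; exact hc1
    · rw [hc2a]; exact hc2
    · rw [hc1a, hc2a]; exact hc12
    · exact hcz a
  choose I J hzf hadj using H1
  have hIstep : ∀ a : ℕ, I a = I (a+1) := by
    intro a
    have hw2 := hWE (p + 3*a + 1)
    obtain ⟨i', j', hz', hadj'⟩ := key_decode n k t hn hkt G E hmem hw2
      (A := f (p + 3*a + 1)) (B := f (p + 3*a + 2)) (C := f (p + 3*a + 3))
      (by simp) (by simp [show p+3*a+1+1 = p+3*a+2 from rfl])
      (by simp [show p+3*a+1+2 = p+3*a+3 from rfl])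
      (by rw [hc1a]; exact hc1) (by rw [hc2a]; exact hc2)
      (by rw [hc1a, hc2a]; exact hc12)
      (by rw [show p+3*a+3 = p + 3*(a+1) from by ring]; exact hcz (a+1))
    have hz2 := hzf (a+1)
    rw [show p + 3*(a+1) = p+3*a+3 from by ring] at hz2
    rw [hz2] at hz'
    obtain ⟨hi, -⟩ := zv_inj hz'
    subst hi
    by_contra hne
    have hd := hdisj (I a) (I (a+1)) hne
    have e1 : s(decV n hn (f (p + 3*a + 1)), decV n hn (f (p + 3*a + 2)))
        ∈ (G (I a)).edgeSet := (hadj a)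
    have e2 : s(decV n hn (f (p + 3*a + 1)), decV n hn (f (p + 3*a + 2)))
        ∈ (G (I (a+1))).edgeSet := hadj'
    exact Set.disjoint_left.mp hd e1 e2
  have hIconst : ∀ a : ℕ, I a = I 0 := by
    intro a
    induction a with
    | zero => rfl
    | succ a ih => rw [← hIstep a, ih]
  have H3 : ∀ a : ℕ, (G (I 0)).Adj (decV n hn (f (p + 3*a + 2))) (decV n hn (f (p + 3*a + 4))) := by
    intro a
    have hw3 := hWE (p + 3*a + 2)
    obtain ⟨i', j', hz', hadj'⟩ := key_decode n k t hn hkt G E hmem hw3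
      (A := f (p + 3*a + 2)) (B := f (p + 3*a + 4)) (C := f (p + 3*a + 3))
      (by simp) (by simp [show p+3*a+2+2 = p+3*a+4 from rfl])
      (by simp [show p+3*a+2+1 = p+3*a+3 from rfl])
      (by rw [hc2a]; exact hc2)
      (by rw [show p+3*a+4 = p + 3*(a+1) + 1 from by ring, hc1a]; exact hc1)
      (by rw [hc2a, show p+3*a+4 = p + 3*(a+1) + 1 from by ring, hc1a]; exact hc12.symm)
      (by rw [show p+3*a+3 = p + 3*(a+1) from by ring]; exact hcz (a+1))
    have hz2 := hzf (a+1)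
    rw [show p + 3*(a+1) = p+3*a+3 from by ring] at hz2
    rw [hz2] at hz'
    obtain ⟨hi, -⟩ := zv_inj hz'
    subst hi
    rw [hIconst (a+1)] at hadj'
    exact hadj'
  have hsk : s ≤ k := by
    have hinj : Function.Injective (fun a : Fin s => J a.val) := by
      intro a a' h
      simp only at h
      have hz1 := hzf a.val
      have hz2 := hzf a'.val
      have hIeq : I a.val = I a'.val := (hIconst _).trans (hIconst _).symm
      have hfe : f (p + 3*a.val) = f (p + 3*a'.val) := by
        rw [hz1, hz2, hIeq, h]
      have hmm : p + 3*a.val ≡ p + 3*a'.val [MOD ℓ] := fmod _ _ hfe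
      have h2 := Nat.ModEq.add_left_cancel' p hmm
      have ha := a.isLt
      have ha' := a'.isLt
      have h3 := Nat.ModEq.eq_of_lt_of_lt h2 (by omega) (by omega)
      exact Fin.ext (by omega)
    have := Fintype.card_le_of_injective _ hinj
    simpa using this
  set W : ℕ → (Fin n ⊕ Fin n) := fun r => decV n hn (f (p + 3*(r/2) + 1 + r % 2)) with hW
  have hadjW : ∀ r : ℕ, (G (I 0)).Adj (W r) (W (r+1)) := by
    intro r
    rcases Nat.even_or_odd r with ⟨a, rfl⟩ | ⟨a, rfl⟩
    · simp only [hW]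
      rw [show (a+a)/2 = a from by omega, show (a+a)%2 = 0 from by omega,
        show (a+a+1)/2 = a from by omega, show (a+a+1)%2 = 1 from by omega,
        show p + 3*a + 1 + 0 = p + 3*a + 1 from by ring,
        show p + 3*a + 1 + 1 = p + 3*a + 2 from by ring]
      have := hadj a
      rwa [hIconst a] at this
    · simp only [hW]
      rw [show (2*a+1)/2 = a from by omega, show (2*a+1)%2 = 1 from by omega,
        show (2*a+1+1)/2 = a+1 from by omega, show (2*a+1+1)%2 = 0 from by omega,
        show p + 3*a + 1 + 1 = p + 3*a + 2 from by ring,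
        show p + 3*(a+1) + 1 + 0 = p + 3*a + 4 from by ring]
      exact H3 a
  have hW2s : W (2*s) = W 0 := by
    simp only [hW]
    rw [show (2*s)/2 = s from by omega, show (2*s)%2 = 0 from by omega,
      show (0:ℕ)/2 = 0 from by omega, show (0:ℕ)%2 = 0 from by omega,
      show p + 3*s + 1 + 0 = (p+1) + ℓ from by omega,
      show p + 3*0 + 1 + 0 = p+1 from by ring, hper]
  have hWinj : ∀ r < 2*s, ∀ r' < 2*s, W r = W r' → r = r' := by
    intro r hr r' hr' h
    simp only [hW] at h
    have hq1 : clsV n (f (p + 3*(r/2) + 1 + r%2)) ≠ 2 := by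
      rcases (by omega : r % 2 = 0 ∨ r % 2 = 1) with h0|h0
      · rw [h0, show p + 3*(r/2) + 1 + 0 = p + 3*(r/2) + 1 from by ring, hc1a]; exact hc1
      · rw [h0, show p + 3*(r/2) + 1 + 1 = p + 3*(r/2) + 2 from by ring, hc2a]; exact hc2
    have hq2 : clsV n (f (p + 3*(r'/2) + 1 + r'%2)) ≠ 2 := by
      rcases (by omega : r' % 2 = 0 ∨ r' % 2 = 1) with h0|h0
      · rw [h0, show p + 3*(r'/2) + 1 + 0 = p + 3*(r'/2) + 1 from by ring, hc1a]; exact hc1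
      · rw [h0, show p + 3*(r'/2) + 1 + 1 = p + 3*(r'/2) + 2 from by ring, hc2a]; exact hc2
    have hfe := decV_inj n hn _ _ (clsV_ne2_lt _ _ hq1) (clsV_ne2_lt _ _ hq2) h
    have hmm : (p+1) + (3*(r/2) + r%2) ≡ (p+1) + (3*(r'/2) + r'%2) [MOD ℓ] := by
      show ((p+1) + (3*(r/2) + r%2)) % ℓ = ((p+1) + (3*(r'/2) + r'%2)) % ℓ
      rw [show (p+1) + (3*(r/2) + r%2) = p + 3*(r/2) + 1 + r%2 from by ring,
        show (p+1) + (3*(r'/2) + r'%2) = p + 3*(r'/2) + 1 + r'%2 from by ring]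
      exact fmod _ _ hfe
    have h2 := Nat.ModEq.add_left_cancel' (p+1) hmm
    have h3 := Nat.ModEq.eq_of_lt_of_lt h2 (by omega) (by omega)
    omega
  obtain ⟨w, hlen, hsup, hedg⟩ := buildWalk (G (I 0)) W (2*s-1) (fun r _ => hadjW r)
  have hpath : w.IsPath := by
    apply SimpleGraph.Walk.IsPath.mk'
    rw [hsup]
    apply List.Nodup.map_on _ (List.nodup_range)
    intro x hx y hy hxy
    rw [List.mem_range] at hx hy
    exact hWinj x (by omega) y (by omega) hxy
  have hclose : (G (I 0)).Adj (W (2*s-1)) (W 0) := by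
    have h := hadjW (2*s-1)
    rwa [show 2*s-1+1 = 2*s from by omega, hW2s] at h
  have hnotedge : s(W (2*s-1), W 0) ∉ w.edges := by
    rw [hedg]
    intro hmem'
    simp only [List.mem_map, List.mem_range] at hmem'
    obtain ⟨r, hr, hsym⟩ := hmem'
    rcases Sym2.eq_iff.mp hsym with ⟨h1, h2⟩ | ⟨h1, h2⟩
    · have := hWinj r (by omega) (2*s-1) (by omega) h1
      omega
    · have e0 := hWinj r (by omega) 0 (by omega) h1
      have e1 := hWinj (r+1) (by omega) (2*s-1) (by omega) h2
      omega
  have hcyc := SimpleGraph.Path.cons_isCycle ⟨w, hpath⟩ hclose hnotedge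
  refine hgirth (I 0) _ _ hcyc ?_
  rw [SimpleGraph.Walk.length_cons]
  simp only [hlen]
  omega

theorem exists_tripartite_tightCycleFree (n k t : ℕ) (hn : 0 < n) (hk : 0 < k)
    (ht : 0 < t) (hkt : k * t ≤ n)
    (G : Fin t → SimpleGraph (Fin n ⊕ Fin n))
    (hsub : ∀ i, G i ≤ completeBipartiteGraph (Fin n) (Fin n))
    (hdisj : ∀ i j, i ≠ j → Disjoint ((G i).edgeSet) ((G j).edgeSet))
    (hgirth : ∀ i, ∀ x, ∀ w : (G i).Walk x x, w.IsCycle → ¬ w.length ≤ 2 * k) :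
    ∃ m : ℕ, m ≤ 3 * n ∧
      ∃ X Y Z : Finset (Fin m), Disjoint X Y ∧ Disjoint X Z ∧ Disjoint Y Z ∧
        X ∪ Y ∪ Z = Finset.univ ∧
        ∃ E : Finset (Finset (Fin m)),
          (∀ e ∈ E, ∃ x ∈ X, ∃ y ∈ Y, ∃ z ∈ Z, e = {x, y, z}) ∧
          TightCycleFree 3 (E : Set (Finset (Fin m))) ∧
          E.card = k * ∑ i : Fin t, (G i).edgeSet.ncard := by
  classical
  refine ⟨3*n, le_rfl, Finset.univ.filter (fun u => u.val < n),
    Finset.univ.filter (fun u => n ≤ u.val ∧ u.val < 2*n),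
    Finset.univ.filter (fun u => 2*n ≤ u.val), ?_, ?_, ?_, ?_, ?_⟩
  · rw [Finset.disjoint_left]; intro a ha hb
    simp only [Finset.mem_filter] at ha hb; omega
  · rw [Finset.disjoint_left]; intro a ha hb
    simp only [Finset.mem_filter] at ha hb; omega
  · rw [Finset.disjoint_left]; intro a ha hb
    simp only [Finset.mem_filter] at ha hb; omega
  · apply Finset.eq_univ_iff_forall.mpr
    intro u
    simp only [Finset.mem_union, Finset.mem_filter, Finset.mem_univ, true_and]
    omega
  set P : Fin t → Finset (Fin n × Fin n) :=
    fun i => Finset.univ.filter (fun ab => (G i).Adj (Sum.inl ab.1) (Sum.inr ab.2)) with hP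
  set F : (Σ _ : Fin t, Fin n × Fin n) × Fin k → Finset (Fin (3*n)) :=
    fun q => {xv n q.1.2.1, yv n q.1.2.2, zv n k t hkt q.1.1 q.2} with hF
  refine ⟨Finset.image F ((Finset.univ.sigma P) ×ˢ Finset.univ), ?_, ?_, ?_⟩
  -- membership characterization
  · intro e he
    simp only [Finset.mem_image] at he
    obtain ⟨q, hq, rfl⟩ := he
    refine ⟨xv n q.1.2.1, ?_, yv n q.1.2.2, ?_, zv n k t hkt q.1.1 q.2, ?_, rfl⟩
    · simp only [Finset.mem_filter, Finset.mem_univ, true_and, xv_val]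
      exact q.1.2.1.isLt
    · simp only [Finset.mem_filter, Finset.mem_univ, true_and, yv_val]
      have := q.1.2.2.isLt; omega
    · simp only [Finset.mem_filter, Finset.mem_univ, true_and, zv_val]
      omega
  · apply tcf_main n k t hn hk ht hkt G hdisj hgirth
    intro S hS
    simp only [Finset.mem_image] at hS
    obtain ⟨⟨⟨i, a, b⟩, j⟩, hq, rfl⟩ := hS
    simp only [Finset.mem_product, Finset.mem_sigma, Finset.mem_univ, true_and,
      Finset.mem_filter, hP] at hq
    exact ⟨i, a, b, j, hq.1, rfl⟩
  · -- cardinality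
    have hFinj : Function.Injective F := by
      rintro ⟨⟨i, a, b⟩, j⟩ ⟨⟨i', a', b'⟩, j'⟩ hq
      simp only [hF] at hq
      have hx : xv n a = xv n a' := by
        have h1 : xv n a ∈ ({xv n a', yv n b', zv n k t hkt i' j'} : Finset (Fin (3*n))) := by
          rw [← hq]; simp
        simp only [Finset.mem_insert, Finset.mem_singleton] at h1
        rcases h1 with h | h | h
        · exact h
        · exfalso; have := congrArg Fin.val h; simp [xv, yv] at this
          have := a.isLt; omega
        · exfalso; have := congrArg Fin.val h; simp [xv, zv] at this
          have := a.isLt; omega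
      have hy : yv n b = yv n b' := by
        have h1 : yv n b ∈ ({xv n a', yv n b', zv n k t hkt i' j'} : Finset (Fin (3*n))) := by
          rw [← hq]; simp
        simp only [Finset.mem_insert, Finset.mem_singleton] at h1
        rcases h1 with h | h | h
        · exfalso; have := congrArg Fin.val h; simp [xv, yv] at this
          have := a'.isLt; omega
        · exact h
        · exfalso; have := congrArg Fin.val h; simp [yv, zv] at this
          have := b.isLt; omega
      have hz : zv n k t hkt i j = zv n k t hkt i' j' := by
        have h1 : zv n k t hkt i j ∈ ({xv n a', yv n b', zv n k t hkt i' j'} : Finset (Fin (3*n))) := by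
          rw [← hq]; simp
        simp only [Finset.mem_insert, Finset.mem_singleton] at h1
        rcases h1 with h | h | h
        · exfalso; have := congrArg Fin.val h; simp [xv, zv] at this
          have := a'.isLt; omega
        · exfalso; have := congrArg Fin.val h; simp [yv, zv] at this
          have := b'.isLt; omega
        · exact h
      obtain ⟨hi, hj⟩ := zv_inj hz
      have := xv_inj hx; have := yv_inj hy
      subst this; subst ‹a = a'›; subst hi; subst hj; rfl
    rw [Finset.card_image_of_injective _ hFinj, Finset.card_product, Finset.card_sigma]
    simp only [Finset.card_univ, Fintype.card_fin]
    rw [mul_comm]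
    congr 1
    apply Finset.sum_congr rfl
    intro i _
    -- ncard edgeSet = (P i).card
    have himg : (G i).edgeSet =
        ↑((P i).image (fun ab => s(Sum.inl ab.1, Sum.inr ab.2))) := by
      ext e
      induction e with
      | _ u w =>
        simp only [SimpleGraph.mem_edgeSet, Finset.coe_image, Set.mem_image,
          Finset.mem_coe, Finset.mem_filter, Finset.mem_univ, true_and, hP]
        constructor
        · intro hadj
          have hbip := hsub i hadj
          simp only [completeBipartiteGraph_adj] at hbip
          rcases hbip with ⟨hl, hr⟩ | ⟨hr, hl⟩
          · obtain ⟨a, rfl⟩ := Sum.isLeft_iff.mp hl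
            obtain ⟨b, rfl⟩ := Sum.isRight_iff.mp hr
            exact ⟨(a, b), hadj, rfl⟩
          · obtain ⟨b, rfl⟩ := Sum.isRight_iff.mp hr
            obtain ⟨a, rfl⟩ := Sum.isLeft_iff.mp hl
            exact ⟨(a, b), hadj.symm, Sym2.eq_swap⟩
        · rintro ⟨⟨a, b⟩, hadj, hab⟩
          have := Sym2.eq_iff.mp hab
          rcases this with ⟨h1, h2⟩ | ⟨h1, h2⟩
          · rw [← h1, ← h2]; exact hadj
          · rw [← h1, ← h2]; exact hadj.symm
    rw [himg, Set.ncard_coe_finset, Finset.card_image_of_injective]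
    rintro ⟨a, b⟩ ⟨a', b'⟩ hab
    simp only [Sym2.eq_iff] at hab
    rcases hab with ⟨h1, h2⟩ | ⟨h1, h2⟩
    · simp_all
    · exact absurd h1 (by simp)
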